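/- arXiv:2304.05308 — 3 statements merged into one kernel-verified Lean document; each statement's English description precedes it below -/
import Mathlib

section
/- Fix ζ > 0, r > 0 and integers 0 ≤ M ≤ m. Let μ, z ∈ 𝓜_ζ with μ ≠ z, and set h = |R(z) \ R(μ)|. Then 0 ≤ h ≤ M and ⟨μ − z, q(μ) − q(z)⟩ ≤ −h ζ r. -/
/-- The ζ-separated multiplier set: all vectors with nonnegative components,
each component either `0` or at least `ζ`, and pairwise distances exceeding `ζ`. -/
def SepSet (m : ℕ) (ζ : ℝ) : Set (Fin m → ℝ) :=
  {μ | (∀ ℓ, 0 ≤ μ ℓ) ∧ (∀ ℓ, μ ℓ = 0 ∨ ζ ≤ μ ℓ) ∧ ∀ i j, i ≠ j → ζ < |μ i - μ j|}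

/-- `S` is the set of indices of the `M` largest components of `μ`. -/
def IsTopM {m : ℕ} (M : ℕ) (μ : Fin m → ℝ) (S : Finset (Fin m)) : Prop :=
  S.card = M ∧ ∀ i ∈ S, ∀ j ∉ S, μ j < μ i

/-- The tightening vector associated with an index set `S` and magnitude `r`:
its `ℓ`-th component is `0` if `ℓ ∈ S` and `r` otherwise. -/
def tight {m : ℕ} (r : ℝ) (S : Finset (Fin m)) : Fin m → ℝ :=
  fun ℓ => if ℓ ∈ S then 0 else r

/-- For ζ-separated multiplier vectors `μ ≠ z`, letting `h = |R(z) \ R(μ)|`,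
one has `0 ≤ h ≤ M` and `⟨μ − z, q(μ) − q(z)⟩ ≤ −h ζ r`. -/
theorem stmt2 {m M : ℕ} (hM : M ≤ m) (ζ r : ℝ) (hζ : 0 < ζ) (hr : 0 < r)
    (μ z : Fin m → ℝ) (hμ : μ ∈ SepSet m ζ) (hz : z ∈ SepSet m ζ) (hne : μ ≠ z)
    (Rμ Rz : Finset (Fin m)) (hRμ : IsTopM M μ Rμ) (hRz : IsTopM M z Rz) :
    (Rz \ Rμ).card ≤ M ∧
      ∑ ℓ, (μ ℓ - z ℓ) * (tight r Rμ ℓ - tight r Rz ℓ) ≤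
        -(((Rz \ Rμ).card : ℝ) * ζ * r) := by
  obtain ⟨hnnμ, hμ0, hsepμ⟩ := hμ
  obtain ⟨hnnz, hz0, hsepz⟩ := hz
  obtain ⟨hcμ, hμtop⟩ := hRμ
  obtain ⟨hcz, hztop⟩ := hRz
  have hcard : (Rμ \ Rz).card = (Rz \ Rμ).card :=
    Finset.card_sdiff_comm (hcμ.trans hcz.symm)
  refine ⟨le_trans (Finset.card_le_card Finset.sdiff_subset) hcz.le, ?_⟩
  have hsum : ∑ ℓ, (μ ℓ - z ℓ) * (tight r Rμ ℓ - tight r Rz ℓ)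
      = ∑ ℓ ∈ (Rz \ Rμ) ∪ (Rμ \ Rz), (μ ℓ - z ℓ) * (tight r Rμ ℓ - tight r Rz ℓ) := by
    refine (Finset.sum_subset (Finset.subset_univ _) ?_).symm
    intro x _ hx
    simp only [Finset.mem_union, Finset.mem_sdiff, not_or, not_and, not_not] at hx
    by_cases h1 : x ∈ Rμ <;> by_cases h2 : x ∈ Rz <;>
      simp [tight, h1, h2] at hx ⊢ <;> tauto
  rw [hsum, Finset.sum_union disjoint_sdiff_sdiff]
  have h1 : ∑ ℓ ∈ Rz \ Rμ, (μ ℓ - z ℓ) * (tight r Rμ ℓ - tight r Rz ℓ)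
      = ∑ ℓ ∈ Rz \ Rμ, (μ ℓ - z ℓ) * r := by
    refine Finset.sum_congr rfl fun x hx => ?_
    simp only [Finset.mem_sdiff] at hx
    simp [tight, hx.1, hx.2]
  have h2 : ∑ ℓ ∈ Rμ \ Rz, (μ ℓ - z ℓ) * (tight r Rμ ℓ - tight r Rz ℓ)
      = ∑ ℓ ∈ Rμ \ Rz, -((μ ℓ - z ℓ) * r) := by
    refine Finset.sum_congr rfl fun x hx => ?_
    simp only [Finset.mem_sdiff] at hx
    simp [tight, hx.1, hx.2]
  rw [h1, h2]
  have e : {x // x ∈ Rz \ Rμ} ≃ {x // x ∈ Rμ \ Rz} := Finset.equivOfCardEq hcard.symm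
  have h3 : ∑ ℓ ∈ Rμ \ Rz, -((μ ℓ - z ℓ) * r)
      = ∑ i : {x // x ∈ Rz \ Rμ}, -((μ (e i) - z (e i)) * r) := by
    rw [← Finset.sum_coe_sort (Rμ \ Rz) (fun ℓ => -((μ ℓ - z ℓ) * r))]
    exact (Equiv.sum_comp e (fun j : {x // x ∈ Rμ \ Rz} => -((μ j - z j) * r))).symm
  rw [h3, ← Finset.sum_coe_sort (Rz \ Rμ) (fun ℓ => (μ ℓ - z ℓ) * r), ← Finset.sum_add_distrib]
  have key : ∀ i : {x // x ∈ Rz \ Rμ},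
      (μ i - z i) * r + -((μ (e i) - z (e i)) * r) ≤ -ζ * r := by
    intro i
    obtain ⟨hi1, hi2⟩ := Finset.mem_sdiff.mp i.2
    obtain ⟨hj1, hj2⟩ := Finset.mem_sdiff.mp (e i).2
    have hne' : (i : Fin m) ≠ ((e i : {x // x ∈ Rμ \ Rz}) : Fin m) :=
      fun h => hi2 (h ▸ hj1)
    have hμlt : μ i < μ (e i) := hμtop _ hj1 _ hi2
    have hzlt : z (e i) < z i := hztop _ hi1 _ hj2
    have hμsep : ζ < |μ i - μ (e i)| := hsepμ _ _ hne'
    have hzsep : ζ < |z i - z (e i)| := hsepz _ _ hne'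
    rw [abs_of_neg (by linarith)] at hμsep
    rw [abs_of_pos (by linarith)] at hzsep
    nlinarith
  calc ∑ i : {x // x ∈ Rz \ Rμ}, ((μ i - z i) * r + -((μ (e i) - z (e i)) * r))
      ≤ (Finset.univ : Finset {x // x ∈ Rz \ Rμ}).card • (-ζ * r) :=
        Finset.sum_le_card_nsmul _ _ _ (fun i _ => key i)
    _ = ((Rz \ Rμ).card : ℝ) * (-ζ * r) := by
        rw [Finset.card_univ, Fintype.card_coe, nsmul_eq_mul]
    _ = -(((Rz \ Rμ).card : ℝ) * ζ * r) := by ring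
end

section
/- Fix ζ > 0, r > 0 and integers 0 ≤ M ≤ m. If μ, z ∈ 𝓜_ζ satisfy ‖μ − z‖_∞ < ζ/2, then R(μ) = R(z) and hence q(μ) = q(z); that is, the tightening map μ ↦ q(μ) is locally constant on 𝓜_ζ. Consequently, for any continuous F : ℝ^d → ℝ^d, any matrix A ∈ ℝ^{m×d} and any b ∈ ℝ^m, the map T(x, μ) = (F(x) + Aᵀμ, −(Ax − b + q(μ))) is continuous on ℝ^d × 𝓜_ζ (with the subspace topology). -/
open Matrix

lemma topM_unique {m M : ℕ} {μ : Fin m → ℝ} {S T : Finset (Fin m)}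
    (hS : IsTopM M μ S) (hT : IsTopM M μ T) : S = T := by
  by_contra hne
  have h1 : (S \ T).Nonempty := by
    rw [Finset.sdiff_nonempty]
    intro hsub
    exact hne (Finset.eq_of_subset_of_card_le hsub (by rw [hS.1, hT.1]))
  have h2 : (T \ S).Nonempty := by
    rw [Finset.sdiff_nonempty]
    intro hsub
    exact hne (Finset.eq_of_subset_of_card_le hsub (by rw [hS.1, hT.1])).symm
  obtain ⟨i, hi⟩ := h1
  obtain ⟨j, hj⟩ := h2
  rw [Finset.mem_sdiff] at hi hj
  have := hS.2 i hi.1 j hj.2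
  have := hT.2 j hj.1 i hi.2
  linarith

lemma topM_transfer {m M : ℕ} {ζ : ℝ} {μ z : Fin m → ℝ} {S : Finset (Fin m)}
    (hμ : μ ∈ SepSet m ζ) (hnorm : ‖μ - z‖ < ζ / 2)
    (hS : IsTopM M μ S) : IsTopM M z S := by
  refine ⟨hS.1, fun i hi j hj => ?_⟩
  have hij : i ≠ j := fun h => hj (h ▸ hi)
  have h1 := hμ.2.2 i j hij
  have h2 := hS.2 i hi j hj
  have h3 : ζ < μ i - μ j := by
    rcases abs_cases (μ i - μ j) with ⟨h, _⟩ | ⟨h, _⟩ <;> linarith [h1, h2]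
  have hi' : |μ i - z i| < ζ / 2 :=
    lt_of_le_of_lt (by simpa using norm_le_pi_norm (μ - z) i) hnorm
  have hj' : |μ j - z j| < ζ / 2 :=
    lt_of_le_of_lt (by simpa using norm_le_pi_norm (μ - z) j) hnorm
  linarith [(abs_lt.mp hi').1, (abs_lt.mp hi').2, (abs_lt.mp hj').1, (abs_lt.mp hj').2]

/-- The tightening map `μ ↦ q(μ)` is locally constant on the ζ-separated set: if
`μ, z ∈ 𝓜_ζ` with `‖μ − z‖_∞ < ζ/2` then `R(μ) = R(z)` and `q(μ) = q(z)`.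
Consequently the primal–dual map `T(x, μ) = (F(x) + Aᵀμ, −(Ax − b + q(μ)))` is
continuous on `ℝ^d × 𝓜_ζ`. -/
theorem stmt5 {d m M : ℕ} (hM : M ≤ m) (ζ r : ℝ) (hζ : 0 < ζ) (hr : 0 < r)
    (Q : (Fin m → ℝ) → Fin m → ℝ)
    (hQ : ∀ μ ∈ SepSet m ζ, ∃ S : Finset (Fin m), IsTopM M μ S ∧ Q μ = tight r S)
    (F : (Fin d → ℝ) → Fin d → ℝ) (hF : Continuous F)
    (A : Matrix (Fin m) (Fin d) ℝ) (b : Fin m → ℝ) :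
    (∀ μ ∈ SepSet m ζ, ∀ z ∈ SepSet m ζ, ‖μ - z‖ < ζ / 2 →
      (∀ Rμ Rz : Finset (Fin m), IsTopM M μ Rμ → IsTopM M z Rz → Rμ = Rz) ∧ Q μ = Q z) ∧
      ContinuousOn
        (fun p : (Fin d → ℝ) × (Fin m → ℝ) =>
          ((fun i => F p.1 i + Aᵀ.mulVec p.2 i : Fin d → ℝ),
            (fun ℓ => -(A.mulVec p.1 ℓ - b ℓ + Q p.2 ℓ) : Fin m → ℝ)))
        (Set.univ ×ˢ SepSet m ζ) := by
  have main : ∀ μ ∈ SepSet m ζ, ∀ z ∈ SepSet m ζ, ‖μ - z‖ < ζ / 2 →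
      (∀ Rμ Rz : Finset (Fin m), IsTopM M μ Rμ → IsTopM M z Rz → Rμ = Rz) ∧ Q μ = Q z := by
    intro μ hμ z hz hnorm
    constructor
    · intro Rμ Rz hRμ hRz
      exact topM_unique (topM_transfer hμ hnorm hRμ) hRz
    · obtain ⟨S, hS, hQS⟩ := hQ μ hμ
      obtain ⟨S', hS', hQS'⟩ := hQ z hz
      rw [hQS, hQS', topM_unique (topM_transfer hμ hnorm hS) hS']
  refine ⟨main, ?_⟩
  have hQcont : ContinuousOn (fun p : (Fin d → ℝ) × (Fin m → ℝ) => Q p.2)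
      (Set.univ ×ˢ SepSet m ζ) := by
    intro p hp
    have hball : Metric.ball p (ζ / 2) ∈ nhds p := Metric.ball_mem_nhds _ (by positivity)
    refine ContinuousWithinAt.congr_of_eventuallyEq (continuousWithinAt_const (b := Q p.2)) ?_ rfl
    filter_upwards [nhdsWithin_le_nhds hball, self_mem_nhdsWithin] with z hzb hzs
    have hdist : dist p.2 z.2 < ζ / 2 := by
      have := Metric.mem_ball.mp hzb
      rw [dist_comm] at this
      calc dist p.2 z.2 ≤ dist p z := by rw [Prod.dist_eq]; exact le_max_right _ _
        _ < ζ / 2 := this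
    have hn : ‖p.2 - z.2‖ < ζ / 2 := by rwa [← dist_eq_norm]
    exact ((main p.2 hp.2 z.2 hzs.2 hn).2).symm
  have h1 : Continuous (fun p : (Fin d → ℝ) × (Fin m → ℝ) =>
      (fun i => F p.1 i + Aᵀ.mulVec p.2 i : Fin d → ℝ)) := by
    have hmv : Continuous fun v : Fin m → ℝ => Aᵀ.mulVec v :=
      (Aᵀ.mulVecLin).continuous_of_finiteDimensional
    exact (hF.comp continuous_fst).add (hmv.comp continuous_snd)
  refine ContinuousOn.prodMk h1.continuousOn ?_
  have h2 : Continuous fun p : (Fin d → ℝ) × (Fin m → ℝ) => A.mulVec p.1 :=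
    (A.mulVecLin).continuous_of_finiteDimensional.comp continuous_fst
  exact (((h2.continuousOn.sub continuousOn_const).add hQcont).neg :)
end

section
/- Fix ζ > 0, r > 0 and integers 0 ≤ M ≤ m. Let X ⊆ ℝ^d, let F : ℝ^d → ℝ^d be α-strongly monotone on X for some α > 0, let A ∈ ℝ^{m×d} and b ∈ ℝ^m, and define T(x, μ) = (F(x) + Aᵀμ, −(Ax − b + q(μ))). Then for all x, x' ∈ X and all μ, μ' ∈ 𝓜_ζ, ⟨T(x, μ) − T(x', μ'), (x, μ) − (x', μ')⟩ ≥ α‖x − x'‖² + h ζ r ≥ α‖x − x'‖², where h = |R(μ') \ R(μ)|. In particular T is monotone on X × 𝓜_ζ. -/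
open Matrix

lemma pair_sum {m : ℕ} {ζ : ℝ} (μ : Fin m → ℝ)
    (hsep : ∀ i j, i ≠ j → ζ < |μ i - μ j|)
    (S T : Finset (Fin m)) (htop : ∀ i ∈ S, ∀ j ∉ S, μ j < μ i)
    (hcard : (T \ S).card = (S \ T).card) :
    ((S \ T).card : ℝ) * ζ + ∑ j ∈ T \ S, μ j ≤ ∑ i ∈ S \ T, μ i := by
  classical
  let e : ((T \ S : Finset (Fin m)) : Type) ≃ ((S \ T : Finset (Fin m)) : Type) :=
    Finset.equivOfCardEq (by simpa using hcard)
  have key : ∀ j : (T \ S : Finset (Fin m)), μ j + ζ ≤ μ (e j) := by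
    intro j
    have hjS : (j : Fin m) ∉ S := (Finset.mem_sdiff.mp j.2).2
    have heS : ((e j : Fin m)) ∈ S := (Finset.mem_sdiff.mp (e j).2).1
    have hlt : μ j < μ (e j) := htop _ heS _ hjS
    have hne : ((e j : Fin m)) ≠ (j : Fin m) := fun h => hjS (h ▸ heS)
    have := hsep (e j) j hne
    rw [abs_of_pos (by linarith)] at this
    linarith
  have h1 : ∑ j : (T \ S : Finset (Fin m)), (μ j + ζ) ≤ ∑ j : (T \ S : Finset (Fin m)), μ (e j) :=
    Finset.sum_le_sum fun j _ => key j
  have h2 : ∑ j : (T \ S : Finset (Fin m)), μ (e j) = ∑ i : (S \ T : Finset (Fin m)), μ i :=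
    Fintype.sum_equiv e _ _ (fun j => rfl)
  have h3 : ∑ j : (T \ S : Finset (Fin m)), (μ j + ζ)
      = (∑ j ∈ T \ S, μ j) + ((T \ S).card : ℝ) * ζ := by
    rw [Finset.sum_add_distrib, Finset.sum_coe_sort]
    simp [Finset.card_univ, mul_comm]
  rw [h3, h2, Finset.sum_coe_sort] at h1
  rw [hcard] at h1
  linarith

/-- Monotonicity of the primal–dual map `T(x, μ) = (F(x) + Aᵀμ, −(Ax − b + q(μ)))` on
`X × 𝓜_ζ`: for `x, x' ∈ X` and `μ, μ' ∈ 𝓜_ζ`, with `h = |R(μ') \ R(μ)|`,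
`⟨T(x,μ) − T(x',μ'), (x,μ) − (x',μ')⟩ ≥ α‖x − x'‖² + hζr ≥ α‖x − x'‖²`. -/
theorem stmt6 {d m M : ℕ} (hM : M ≤ m) (ζ r : ℝ) (hζ : 0 < ζ) (hr : 0 < r)
    (X : Set (Fin d → ℝ)) (F : (Fin d → ℝ) → Fin d → ℝ) (α : ℝ) (hα : 0 < α)
    (hmono : ∀ x ∈ X, ∀ y ∈ X,
      α * ∑ i, (x i - y i) ^ 2 ≤ ∑ i, (F x i - F y i) * (x i - y i))
    (A : Matrix (Fin m) (Fin d) ℝ) (b : Fin m → ℝ)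
    (x x' : Fin d → ℝ) (hx : x ∈ X) (hx' : x' ∈ X)
    (μ μ' : Fin m → ℝ) (hμ : μ ∈ SepSet m ζ) (hμ' : μ' ∈ SepSet m ζ)
    (Rμ Rμ' : Finset (Fin m)) (hRμ : IsTopM M μ Rμ) (hRμ' : IsTopM M μ' Rμ') :
    α * ∑ i, (x i - x' i) ^ 2 + ((Rμ' \ Rμ).card : ℝ) * ζ * r ≤
        (∑ i, ((F x i + Aᵀ.mulVec μ i) - (F x' i + Aᵀ.mulVec μ' i)) * (x i - x' i) +
          ∑ ℓ, (-(A.mulVec x ℓ - b ℓ + tight r Rμ ℓ) -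
              -(A.mulVec x' ℓ - b ℓ + tight r Rμ' ℓ)) * (μ ℓ - μ' ℓ)) ∧
      α * ∑ i, (x i - x' i) ^ 2 ≤
        (∑ i, ((F x i + Aᵀ.mulVec μ i) - (F x' i + Aᵀ.mulVec μ' i)) * (x i - x' i) +
          ∑ ℓ, (-(A.mulVec x ℓ - b ℓ + tight r Rμ ℓ) -
              -(A.mulVec x' ℓ - b ℓ + tight r Rμ' ℓ)) * (μ ℓ - μ' ℓ)) := by
  classical
  -- Step 1: algebraic identity
  have hid : (∑ i, ((F x i + Aᵀ.mulVec μ i) - (F x' i + Aᵀ.mulVec μ' i)) * (x i - x' i) +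
          ∑ ℓ, (-(A.mulVec x ℓ - b ℓ + tight r Rμ ℓ) -
              -(A.mulVec x' ℓ - b ℓ + tight r Rμ' ℓ)) * (μ ℓ - μ' ℓ))
      = ∑ i, (F x i - F x' i) * (x i - x' i) +
        ∑ ℓ, (tight r Rμ' ℓ - tight r Rμ ℓ) * (μ ℓ - μ' ℓ) := by
    simp only [Matrix.mulVec, Matrix.transpose_apply, dotProduct]
    have e1 : ∀ i, ((F x i + ∑ ℓ, A ℓ i * μ ℓ) - (F x' i + ∑ ℓ, A ℓ i * μ' ℓ)) * (x i - x' i)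
        = (F x i - F x' i) * (x i - x' i) + ∑ ℓ, A ℓ i * (μ ℓ - μ' ℓ) * (x i - x' i) := by
      intro i
      have : ∑ ℓ, A ℓ i * (μ ℓ - μ' ℓ) * (x i - x' i)
          = ((∑ ℓ, A ℓ i * μ ℓ) - (∑ ℓ, A ℓ i * μ' ℓ)) * (x i - x' i) := by
        rw [← Finset.sum_sub_distrib, Finset.sum_mul]
        exact Finset.sum_congr rfl fun ℓ _ => by ring
      rw [this]; ring
    have e2 : ∀ ℓ, (-((∑ i, A ℓ i * x i) - b ℓ + tight r Rμ ℓ) -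
              -((∑ i, A ℓ i * x' i) - b ℓ + tight r Rμ' ℓ)) * (μ ℓ - μ' ℓ)
        = (tight r Rμ' ℓ - tight r Rμ ℓ) * (μ ℓ - μ' ℓ)
          - ∑ i, A ℓ i * (μ ℓ - μ' ℓ) * (x i - x' i) := by
      intro ℓ
      have : ∑ i, A ℓ i * (μ ℓ - μ' ℓ) * (x i - x' i)
          = ((∑ i, A ℓ i * x i) - (∑ i, A ℓ i * x' i)) * (μ ℓ - μ' ℓ) := by
        rw [← Finset.sum_sub_distrib, Finset.sum_mul]
        exact Finset.sum_congr rfl fun i _ => by ring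
      rw [this]; ring
    rw [Finset.sum_congr rfl fun i _ => e1 i, Finset.sum_congr rfl fun ℓ _ => e2 ℓ,
      Finset.sum_add_distrib, Finset.sum_sub_distrib, Finset.sum_comm]
    ring
  -- Step 2: bound the tightening term
  obtain ⟨hc, htop⟩ := hRμ
  obtain ⟨hc', htop'⟩ := hRμ'
  have hcard : (Rμ' \ Rμ).card = (Rμ \ Rμ').card :=
    Finset.card_sdiff_comm (hc'.trans hc.symm)
  have hQ : ((Rμ' \ Rμ).card : ℝ) * ζ * r ≤
      ∑ ℓ, (tight r Rμ' ℓ - tight r Rμ ℓ) * (μ ℓ - μ' ℓ) := by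
    have hsplit : ∑ ℓ, (tight r Rμ' ℓ - tight r Rμ ℓ) * (μ ℓ - μ' ℓ)
        = (∑ ℓ ∈ Rμ \ Rμ', r * (μ ℓ - μ' ℓ)) + ∑ ℓ ∈ Rμ' \ Rμ, r * (μ' ℓ - μ ℓ) := by
      have hpt : ∀ ℓ, (tight r Rμ' ℓ - tight r Rμ ℓ) * (μ ℓ - μ' ℓ)
          = (if ℓ ∈ Rμ \ Rμ' then r * (μ ℓ - μ' ℓ) else 0)
            + (if ℓ ∈ Rμ' \ Rμ then r * (μ' ℓ - μ ℓ) else 0) := by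
        intro ℓ
        simp only [tight, Finset.mem_sdiff]
        by_cases h1 : ℓ ∈ Rμ <;> by_cases h2 : ℓ ∈ Rμ' <;> simp [h1, h2] <;> ring
      rw [Finset.sum_congr rfl fun ℓ _ => hpt ℓ, Finset.sum_add_distrib,
        Finset.sum_ite_mem, Finset.sum_ite_mem, Finset.univ_inter, Finset.univ_inter]
    have p1 := pair_sum μ hμ.2.2 Rμ Rμ' htop hcard
    have p2 := pair_sum μ' hμ'.2.2 Rμ' Rμ htop' hcard.symm
    have hcR : ((Rμ \ Rμ').card : ℝ) = ((Rμ' \ Rμ).card : ℝ) := by exact_mod_cast hcard.symm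
    rw [hcR] at p1
    have e1 : ∑ ℓ ∈ Rμ \ Rμ', r * (μ ℓ - μ' ℓ)
        = r * ((∑ ℓ ∈ Rμ \ Rμ', μ ℓ) - ∑ ℓ ∈ Rμ \ Rμ', μ' ℓ) := by
      rw [← Finset.sum_sub_distrib, Finset.mul_sum]
    have e2 : ∑ ℓ ∈ Rμ' \ Rμ, r * (μ' ℓ - μ ℓ)
        = r * ((∑ ℓ ∈ Rμ' \ Rμ, μ' ℓ) - ∑ ℓ ∈ Rμ' \ Rμ, μ ℓ) := by
      rw [← Finset.sum_sub_distrib, Finset.mul_sum]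
    rw [hsplit, e1, e2]
    have hpos : (0:ℝ) ≤ ((Rμ' \ Rμ).card : ℝ) * ζ := by positivity
    have hsum : ((Rμ' \ Rμ).card : ℝ) * ζ ≤
        ((∑ ℓ ∈ Rμ \ Rμ', μ ℓ) - ∑ ℓ ∈ Rμ \ Rμ', μ' ℓ) +
          ((∑ ℓ ∈ Rμ' \ Rμ, μ' ℓ) - ∑ ℓ ∈ Rμ' \ Rμ, μ ℓ) := by linarith
    have hmul := mul_le_mul_of_nonneg_left hsum hr.le
    rw [mul_add] at hmul
    linarith
  have hF : α * ∑ i, (x i - x' i) ^ 2 ≤ ∑ i, (F x i - F x' i) * (x i - x' i) :=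
    hmono x hx x' hx'
  have hQ0 : (0:ℝ) ≤ ((Rμ' \ Rμ).card : ℝ) * ζ * r := by positivity
  rw [hid] at *
  constructor <;> linarith
end
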